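/- For every pair of positive integers k and c there exists an integer F = F(k,c) such that for every c-coloring of the powerset of any set X with |X| ≥ F, there exist pairwise disjoint nonempty subsets D_1, ..., D_k of X such that all unions ⋃_{i∈I} D_i over nonempty I ⊆ {1,...,k} receive the same color. -/

import Mathlib

open Finset in
/-- carry-free addition: if `x < 2^t` and `2^t ∣ y`, bits of `x+y` are union of bits. -/
lemma bits_add_of_lt_of_dvd {x y t : ℕ} (hx : x < 2 ^ t) (hy : 2 ^ t ∣ y) (i : ℕ) :
    (x + y).testBit i = (x.testBit i || y.testBit i) := by
  obtain ⟨a, rfl⟩ := hy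
  rw [Nat.add_comm, Nat.two_pow_add_eq_or_of_lt hx, Nat.testBit_or, Bool.or_comm]

/-- map an FS-element of the coerced stream back to `ℕ+`. -/
lemma exists_pnat_of_mem_FS {b : Stream' ℕ} {m : ℕ}
    (h : m ∈ Hindman.FS b) (a : Stream' ℕ+) (hab : b = a.map (fun x : ℕ+ => (x : ℕ))) :
    ∃ m' : ℕ+, m' ∈ Hindman.FS a ∧ (m' : ℕ) = m := by
  induction h generalizing a with
  | head' b => exact ⟨a.head, Hindman.FS.head a, by rw [hab]; rfl⟩
  | tail' b m h ih =>
    obtain ⟨m', hm', hv⟩ := ih a.tail (by rw [hab, Stream'.map_tail])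
    exact ⟨m', Hindman.FS.tail a m' hm', hv⟩
  | cons' b m h ih =>
    obtain ⟨m', hm', hv⟩ := ih a.tail (by rw [hab, Stream'.map_tail])
    refine ⟨a.head + m', Hindman.FS.cons a m' hm', ?_⟩
    rw [hab, PNat.add_coe, hv]; rfl

/-- Finset-sums of coerced terms of a `ℕ+`-stream come from `FS`. -/
lemma exists_mem_FS_sum (a : Stream' ℕ+) (s : Finset ℕ) (hs : s.Nonempty) :
    ∃ m' : ℕ+, m' ∈ Hindman.FS a ∧ (m' : ℕ) = ∑ i ∈ s, (a.get i : ℕ) := by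
  have h := Hindman.FS.finset_sum (a.map (fun x : ℕ+ => (x : ℕ))) s hs
  simp only [Stream'.get_map] at h
  obtain ⟨m', hm', hv⟩ := exists_pnat_of_mem_FS h a rfl
  exact ⟨m', hm', by rw [hv]⟩

/-- pigeonhole: a consecutive block with sum divisible by `2^t`, starting past `N`. -/
lemma exists_block_dvd (b : ℕ → ℕ) (N t : ℕ) :
    ∃ p q, N ≤ p ∧ p < q ∧ 2 ^ t ∣ ∑ i ∈ Finset.Ico p q, b i := by
  set P : ℕ → ℕ := fun j => ∑ i ∈ Finset.Ico N (N + j), b i with hP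
  have hmaps : ∀ j ∈ Finset.range (2 ^ t + 1), P j % 2 ^ t ∈ Finset.range (2 ^ t) := by
    intro j _
    exact Finset.mem_range.2 (Nat.mod_lt _ (Nat.pow_pos (n := t) (by norm_num)))
  obtain ⟨j1, hj1, j2, hj2, hne, heq⟩ :=
    Finset.exists_ne_map_eq_of_card_lt_of_maps_to (by simp) hmaps
  wlog hlt : j1 < j2 generalizing j1 j2
  · exact this j2 hj2 j1 hj1 hne.symm heq.symm (by omega)
  refine ⟨N + j1, N + j2, Nat.le_add_right _ _, by omega, ?_⟩
  have hsum : P j1 + ∑ i ∈ Finset.Ico (N + j1) (N + j2), b i = P j2 :=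
    Finset.sum_Ico_consecutive b (by omega) (by omega)
  have : P j1 ≡ P j2 [MOD 2 ^ t] := heq
  rw [← hsum] at this
  have h0 : 0 ≡ ∑ i ∈ Finset.Ico (N + j1) (N + j2), b i [MOD 2 ^ t] :=
    (Nat.ModEq.add_left_cancel' (P j1) (by simpa using this))
  exact (Nat.modEq_zero_iff_dvd.1 h0.symm)

/-- Construction of `k` blocks of indices, ordered, with each block-sum divisible by a
power of two exceeding the sum of all previous block-sums. -/
lemma exists_blocks (b : ℕ → ℕ) (k : ℕ) :
    ∃ s : ℕ → Finset ℕ,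
      (∀ j, j < k → (s j).Nonempty) ∧
      (∀ j1 j2, j1 < j2 → j2 < k → ∀ x ∈ s j1, ∀ y ∈ s j2, x < y) ∧
      (∀ j, j + 1 < k →
        2 ^ ((∑ j' ∈ Finset.range (j + 1), ∑ i ∈ s j', b i) + 1) ∣ ∑ i ∈ s (j + 1), b i) := by
  induction k with
  | zero => exact ⟨fun _ => ∅, by omega, by omega, by omega⟩
  | succ k ih =>
    obtain ⟨s, h1, h2, h3⟩ := ih
    set N : ℕ := (((Finset.range k).biUnion s).sup id) + 1 with hN
    set t : ℕ := (∑ j' ∈ Finset.range k, ∑ i ∈ s j', b i) + 1 with ht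
    obtain ⟨p, q, hNp, hpq, hdvd⟩ := exists_block_dvd b N t
    set s' : ℕ → Finset ℕ := fun j => if j < k then s j else Finset.Ico p q with hs'
    have hsame : ∀ j, j < k → s' j = s j := fun j hj => by simp [hs', hj]
    have hnew : s' k = Finset.Ico p q := by simp [hs']
    refine ⟨s', ?_, ?_, ?_⟩
    · intro j hj
      rcases Nat.lt_or_ge j k with h | h
      · rw [hsame j h]; exact h1 j h
      · have : j = k := by omega
        rw [this, hnew]
        exact ⟨p, Finset.mem_Ico.2 ⟨le_refl _, hpq⟩⟩
    · intro j1 j2 hj hj2 x hx y hy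
      rcases Nat.lt_or_ge j2 k with h | h
      · rw [hsame j1 (by omega)] at hx; rw [hsame j2 h] at hy
        exact h2 j1 j2 hj h x hx y hy
      · have hj2k : j2 = k := by omega
        rw [hsame j1 (by omega)] at hx
        rw [hj2k, hnew] at hy
        have hxN : x ≤ ((Finset.range k).biUnion s).sup id := by
          apply Finset.le_sup (f := id)
          exact Finset.mem_biUnion.2 ⟨j1, Finset.mem_range.2 (by omega), hx⟩
        have := (Finset.mem_Ico.1 hy).1
        omega
    · intro j hj
      rcases Nat.lt_or_ge (j + 1) k with h | h
      · have heq : ∀ j' ∈ Finset.range (j + 1), ∑ i ∈ s' j', b i = ∑ i ∈ s j', b i := by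
          intro j' hj'
          rw [hsame j' (by have := Finset.mem_range.1 hj'; omega)]
        rw [Finset.sum_congr rfl heq, hsame (j + 1) h]
        exact h3 j h
      · have hjk : j + 1 = k := by omega
        have heq : ∀ j' ∈ Finset.range (j + 1), ∑ i ∈ s' j', b i = ∑ i ∈ s j', b i := by
          intro j' hj'
          rw [hsame j' (by have := Finset.mem_range.1 hj'; omega)]
        rw [Finset.sum_congr rfl heq, hjk, hnew, ← ht]
        exact hdvd

section Blocks

variable {b : ℕ → ℕ} {k : ℕ} {s : ℕ → Finset ℕ}
variable (h3 : ∀ j, j + 1 < k →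
    2 ^ ((∑ j' ∈ Finset.range (j + 1), ∑ i ∈ s j', b i) + 1) ∣ ∑ i ∈ s (j + 1), b i)

include h3

lemma sum_testBit_iff (I : Finset ℕ) (hIk : I ⊆ Finset.range k) (i : ℕ) :
    ((∑ j ∈ I, ∑ l ∈ s j, b l).testBit i = true ↔
      ∃ j ∈ I, (∑ l ∈ s j, b l).testBit i = true) := by
  set v : ℕ → ℕ := fun j => ∑ l ∈ s j, b l with hv
  induction I using Finset.induction_on_max with
  | empty => simp
  | insert a I ha IH =>
    have haI : a ∉ I := fun h => lt_irrefl a (ha a h)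
    have hsub : I ⊆ Finset.range k := fun x hx => hIk (Finset.mem_insert_of_mem hx)
    rcases Nat.eq_zero_or_pos a with rfl | hapos
    · have hIempty : I = ∅ := Finset.eq_empty_of_forall_notMem (fun x hx => by
        have := ha x hx; omega)
      subst hIempty
      simp [hv]
    · obtain ⟨j, rfl⟩ : ∃ j, a = j + 1 := ⟨a - 1, by omega⟩
      have hIrange : I ⊆ Finset.range (j + 1) := fun x hx =>
        Finset.mem_range.2 (ha x hx)
      set S : ℕ := ∑ j' ∈ Finset.range (j + 1), v j' with hS
      have hxle : ∑ j' ∈ I, v j' ≤ S :=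
        Finset.sum_le_sum_of_subset hIrange
      have hxlt : ∑ j' ∈ I, v j' < 2 ^ (S + 1) := by
        have h1 := Nat.lt_two_pow_self (n := S)
        have h2 : (2:ℕ) ^ S ≤ 2 ^ (S + 1) := Nat.pow_le_pow_right (by norm_num) (by omega)
        omega
      have hy : 2 ^ (S + 1) ∣ v (j + 1) :=
        h3 j (Finset.mem_range.1 (hIk (Finset.mem_insert_self _ _)))
      rw [Finset.sum_insert haI, add_comm, bits_add_of_lt_of_dvd hxlt hy i]
      simp only [Bool.or_eq_true, Finset.mem_insert]
      constructor
      · rintro (h | h)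
        · obtain ⟨j', hj', h⟩ := (IH hsub).1 h
          exact ⟨j', Or.inr hj', h⟩
        · exact ⟨j + 1, Or.inl rfl, h⟩
      · rintro ⟨j', (rfl | hj'), h⟩
        · exact Or.inr h
        · exact Or.inl ((IH hsub).2 ⟨j', hj', h⟩)

lemma supports_disjoint {j1 j2 : ℕ} (hj : j1 < j2) (hjk : j2 < k) (i : ℕ)
    (h1 : (∑ l ∈ s j1, b l).testBit i = true) :
    (∑ l ∈ s j2, b l).testBit i = false := by
  obtain ⟨j, rfl⟩ : ∃ j, j2 = j + 1 := ⟨j2 - 1, by omega⟩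
  have hvle : (∑ l ∈ s j1, b l) ≤ ∑ j' ∈ Finset.range (j + 1), ∑ l ∈ s j', b l :=
    Finset.single_le_sum (f := fun j => ∑ l ∈ s j, b l) (fun _ _ => Nat.zero_le _)
      (Finset.mem_range.2 (by omega))
  have h2i : 2 ^ i ≤ ∑ l ∈ s j1, b l := Nat.ge_two_pow_of_testBit h1
  have hit : i < (∑ j' ∈ Finset.range (j + 1), ∑ l ∈ s j', b l) + 1 := by
    by_contra hcon
    have hle : (2:ℕ) ^ ((∑ j' ∈ Finset.range (j + 1), ∑ l ∈ s j', b l) + 1) ≤ 2 ^ i :=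
      Nat.pow_le_pow_right (by norm_num) (by omega)
    have := Nat.lt_two_pow_self (n := ∑ j' ∈ Finset.range (j + 1), ∑ l ∈ s j', b l)
    omega
  obtain ⟨m, hm⟩ := h3 j hjk
  rw [hm, Nat.testBit_two_pow_mul]
  simp [Nat.not_le_of_lt hit]

end Blocks

open Classical in
/-- **Infinite Folkman theorem** for colorings of `Set ℕ`, with bounded witnesses. -/
theorem folkman_inf (k c : ℕ) (χ : Set ℕ → Fin c) (hc : 0 < c) :
    ∃ (N : ℕ) (D : Fin k → Set ℕ) (γ : Fin c),
      (∀ i, (D i).Nonempty) ∧ (∀ i, ∀ x ∈ D i, x < N) ∧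
      (Pairwise fun i j => Disjoint (D i) (D j)) ∧
      ∀ I : Set (Fin k), I.Nonempty → χ (⋃ i ∈ I, D i) = γ := by
  -- apply Hindman's theorem on ℕ+ to the induced coloring
  have hcover : (⊤ : Set ℕ+) ⊆
      ⋃₀ (Set.range fun γ : Fin c => {m : ℕ+ | χ {i | (m : ℕ).testBit i = true} = γ}) := by
    intro m _
    exact ⟨_, ⟨χ {i | (m : ℕ).testBit i = true}, rfl⟩, rfl⟩
  obtain ⟨C, ⟨γ, rfl⟩, a, hFS⟩ :=
    Hindman.exists_FS_of_finite_cover _ (Set.finite_range _) hcover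
  set b : ℕ → ℕ := fun l => (a.get l : ℕ) with hb
  have hbpos : ∀ l, 0 < b l := fun l => (a.get l).pos
  obtain ⟨s, h1, h2, h3⟩ := exists_blocks b k
  set v : ℕ → ℕ := fun j => ∑ l ∈ s j, b l with hv
  have hvpos : ∀ j, j < k → 0 < v j := fun j hj =>
    Finset.sum_pos (fun l _ => hbpos l) (h1 j hj)
  refine ⟨(∑ j ∈ Finset.range k, v j) + 1,
    fun i => {x | (v i.val).testBit x = true}, γ, ?_, ?_, ?_, ?_⟩
  · -- nonempty
    intro i
    obtain ⟨x, hx⟩ := Nat.exists_testBit_of_ne_zero (Nat.pos_iff_ne_zero.1 (hvpos i.val i.isLt))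
    exact ⟨x, hx⟩
  · -- bounded
    intro i x hx
    have h2x : 2 ^ x ≤ v i.val := Nat.ge_two_pow_of_testBit hx
    have hle : v i.val ≤ ∑ j ∈ Finset.range k, v j :=
      Finset.single_le_sum (f := v) (fun _ _ => Nat.zero_le _) (Finset.mem_range.2 i.isLt)
    have := Nat.lt_two_pow_self (n := x)
    omega
  · -- pairwise disjoint
    have key : ∀ i j : Fin k, i < j →
        Disjoint {x | (v i.val).testBit x = true} {x | (v j.val).testBit x = true} := by
      intro i j hij
      rw [Set.disjoint_left]
      intro x hxi hxj
      have := supports_disjoint h3 (show i.val < j.val from hij) j.isLt x hxi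
      have hxj' : (∑ l ∈ s (j : ℕ), b l).testBit x = true := hxj
      rw [hxj'] at this
      exact Bool.noConfusion this
    exact fun i j hne => (lt_or_gt_of_ne hne).elim (key i j) (fun h => (key j i h).symm)
  · -- colors
    intro I hI
    set J : Finset ℕ := (Set.toFinite I).toFinset.image Fin.val with hJ
    have hJk : J ⊆ Finset.range k := by
      intro x hx
      obtain ⟨i, _, rfl⟩ := Finset.mem_image.1 hx
      exact Finset.mem_range.2 i.isLt
    have hJne : J.Nonempty := by
      obtain ⟨i, hi⟩ := hI
      exact ⟨i.val, Finset.mem_image.2 ⟨i, (Set.Finite.mem_toFinset _).2 hi, rfl⟩⟩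
    -- the union of supports is the support of the block-union sum
    have hset : (⋃ i ∈ I, {x | (v i.val).testBit x = true}) =
        {x | (∑ j ∈ J, v j).testBit x = true} := by
      ext x
      simp only [Set.mem_iUnion, Set.mem_setOf_eq]
      rw [sum_testBit_iff h3 J hJk x]
      constructor
      · rintro ⟨i, hi, h⟩
        exact ⟨i.val, Finset.mem_image.2 ⟨i, (Set.Finite.mem_toFinset _).2 hi, rfl⟩, h⟩
      · rintro ⟨j, hj, h⟩
        obtain ⟨i, hi, rfl⟩ := Finset.mem_image.1 hj
        exact ⟨i, (Set.Finite.mem_toFinset _).1 hi, h⟩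
    -- the block-union sum is a finite sum of the stream
    have hdisj : (↑J : Set ℕ).PairwiseDisjoint s := by
      intro j1 hj1 j2 hj2 hne
      have hj1k := Finset.mem_range.1 (hJk hj1)
      have hj2k := Finset.mem_range.1 (hJk hj2)
      wlog hlt : j1 < j2 generalizing j1 j2
      · exact (this hj2 hj1 hne.symm hj2k hj1k (by omega)).symm
      simp only [Function.onFun]
      rw [Finset.disjoint_left]
      intro x hx1 hx2
      exact lt_irrefl x (h2 j1 j2 hlt hj2k x hx1 x hx2)
    have hsum : ∑ l ∈ J.biUnion s, b l = ∑ j ∈ J, v j := Finset.sum_biUnion hdisj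
    have hKne : (J.biUnion s).Nonempty := by
      obtain ⟨j, hj⟩ := hJne
      obtain ⟨x, hx⟩ := h1 j (Finset.mem_range.1 (hJk hj))
      exact ⟨x, Finset.mem_biUnion.2 ⟨j, hj, hx⟩⟩
    obtain ⟨m', hm', hval⟩ := exists_mem_FS_sum a (J.biUnion s) hKne
    have hcol := hFS hm'
    have : {i | (m' : ℕ).testBit i = true} = ⋃ i ∈ I, {x | (v i.val).testBit x = true} := by
      rw [hset, hval, hsum]
    show χ (⋃ i ∈ I, {x | (v i.val).testBit x = true}) = γ
    rw [← this]
    exact hcol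

/-- **Folkman's theorem (finite disjoint union theorem).** For every pair of positive
integers `k` and `c` there is an integer `F` such that for every `c`-coloring of the
powerset of any set `X` of cardinality at least `F`, there are pairwise disjoint nonempty
subsets `D 1, ..., D k` of `X` all of whose unions over nonempty index sets get the
same color. -/
theorem stmt0 (k c : ℕ) (hk : 0 < k) (hc : 0 < c) :
    ∃ F : ℕ, ∀ (X : Type) (χ : Set X → Fin c), (F : Cardinal) ≤ Cardinal.mk X →
      ∃ D : Fin k → Set X,
        (∀ i, (D i).Nonempty) ∧
        (Pairwise fun i j => Disjoint (D i) (D j)) ∧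
        ∃ γ : Fin c, ∀ I : Set (Fin k), I.Nonempty → χ (⋃ i ∈ I, D i) = γ := by
  by_contra hcon
  push_neg at hcon
  choose X χX hcard hbad using hcon
  have hemb : ∀ n : ℕ, Nonempty (Fin n ↪ X n) := fun n =>
    (Cardinal.le_def _ _).1 (by rw [Cardinal.mk_fin]; exact hcard n)
  have g : ∀ n : ℕ, Fin n ↪ X n := fun n => (hemb n).some
  set χ' : ℕ → Set ℕ → Fin c := fun n S => χX n (g n '' {j : Fin n | (j : ℕ) ∈ S}) with hχ'
  set U : Ultrafilter ℕ := Filter.hyperfilter ℕ with hU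
  -- take the ultrafilter limit of the colorings χ' n
  have hlim : ∀ S : Set ℕ, ∃ γ : Fin c, {n | χ' n S = γ} ∈ U := by
    intro S
    obtain ⟨γ, hγ⟩ := Ultrafilter.eq_pure_of_finite (U.map fun n => χ' n S)
    refine ⟨γ, ?_⟩
    have h1 : {γ} ∈ U.map fun n => χ' n S := by
      rw [hγ]; exact Filter.mem_pure.2 rfl
    exact h1
  choose χ hχ using hlim
  obtain ⟨N, D, γ, hne, hbd, hdisj, hcolor⟩ := folkman_inf k c χ hc
  -- a U-large set of n on which everything works
  have hbig : (⋂ I : {I : Set (Fin k) // I.Nonempty},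
      {n | χ' n (⋃ i ∈ I.val, D i) = γ}) ∈ U := by
    rw [← Ultrafilter.mem_coe, Filter.iInter_mem]
    intro I
    have := hχ (⋃ i ∈ I.val, D i)
    rwa [hcolor I.val I.property] at this
  have hcof : {n | N ≤ n} ∈ U := by
    have := (Set.finite_Iio N).compl_mem_hyperfilter
    convert this using 1
    ext n
    simp [not_lt]
  obtain ⟨n, hn⟩ := Ultrafilter.nonempty_of_mem (Filter.inter_mem hcof hbig)
  obtain ⟨hnN, hnI⟩ := hn
  have hnI : ∀ I : Set (Fin k), I.Nonempty → χ' n (⋃ i ∈ I, D i) = γ := by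
    intro I hI
    exact Set.mem_iInter.1 hnI ⟨I, hI⟩
  -- transfer to X n
  set E : Fin k → Set (X n) := fun i => g n '' {j : Fin n | (j : ℕ) ∈ D i} with hE
  have hEne : ∀ i, (E i).Nonempty := by
    intro i
    obtain ⟨x, hx⟩ := hne i
    have hxn : x < n := lt_of_lt_of_le (hbd i x hx) hnN
    exact ⟨g n ⟨x, hxn⟩, ⟨⟨x, hxn⟩, hx, rfl⟩⟩
  have hEdisj : Pairwise fun i j => Disjoint (E i) (E j) := by
    intro i j hij
    apply (Set.disjoint_image_iff (g n).injective).2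
    rw [Set.disjoint_left]
    intro a ha1 ha2
    exact Set.disjoint_left.1 (hdisj hij) ha1 ha2
  obtain ⟨I, hIne, hneq⟩ := hbad n E hEne hEdisj γ
  apply hneq
  have him : (⋃ i ∈ I, E i) = g n '' {j : Fin n | (j : ℕ) ∈ ⋃ i ∈ I, D i} := by
    have : {j : Fin n | (j : ℕ) ∈ ⋃ i ∈ I, D i} = ⋃ i ∈ I, {j : Fin n | (j : ℕ) ∈ D i} := by
      ext j; simp
    rw [this, Set.image_iUnion₂]
  rw [him]
  exact hnI I hIne
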